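/- Let a₁,…,a₉ ∈ ℂ be such that a₁,a₂,a₃ are pairwise distinct, a₄,a₅,a₉ are pairwise distinct, and a₆,a₇,a₈ are pairwise distinct, and consider the nine points of ℙ²(ℂ): p₁=(1:−a₁:1), p₂=(1:−a₂:1), p₃=(1:−a₃:1), p₄=(0:a₄:1), p₅=(0:a₅:1), p₉=(0:a₉:1), p₆=(1:a₆:0), p₇=(1:a₇:0), p₈=(1:a₈:0). Then every nonzero homogeneous polynomial f ∈ ℂ[x₀,x₁,x₂] of degree 3 vanishing at all nine points is a scalar multiple of x₀(x₀−x₂)x₂ if and only if a₁+a₂+⋯+a₉ ≠ 0. -/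

import Mathlib

open MvPolynomial

noncomputable def mm (a b c : ℕ) : Fin 3 →₀ ℕ :=
  Finsupp.single 0 a + Finsupp.single 1 b + Finsupp.single 2 c

lemma mm0 (a b c : ℕ) : mm a b c 0 = a := by simp [mm, Finsupp.single_apply]
lemma mm1 (a b c : ℕ) : mm a b c 1 = b := by simp [mm, Finsupp.single_apply]
lemma mm2 (a b c : ℕ) : mm a b c 2 = c := by simp [mm, Finsupp.single_apply]

lemma mm_eq_iff {a b c a' b' c' : ℕ} : mm a b c = mm a' b' c' ↔ a = a' ∧ b = b' ∧ c = c' := by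
  constructor
  · intro h
    refine ⟨?_, ?_, ?_⟩
    · have := DFunLike.congr_fun h 0; simpa [mm0] using this
    · have := DFunLike.congr_fun h 1; simpa [mm1] using this
    · have := DFunLike.congr_fun h 2; simpa [mm2] using this
  · rintro ⟨rfl, rfl, rfl⟩; rfl

lemma Xpow_eq (a b c : ℕ) :
    (X 0 : MvPolynomial (Fin 3) ℂ) ^ a * X 1 ^ b * X 2 ^ c = monomial (mm a b c) 1 := by
  rw [X_pow_eq_monomial, X_pow_eq_monomial, X_pow_eq_monomial, monomial_mul, monomial_mul, mm]
  simp

lemma CXpow_eq (a b c : ℕ) (z : ℂ) :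
    (C z * (X 0 ^ a * X 1 ^ b * X 2 ^ c) : MvPolynomial (Fin 3) ℂ) = monomial (mm a b c) z := by
  rw [Xpow_eq, C_mul_monomial, mul_one]

lemma mm_degree (d : Fin 3 →₀ ℕ) : d.degree = d 0 + d 1 + d 2 := by
  rw [Finsupp.degree_apply, Finset.sum_subset (Finset.subset_univ d.support)]
  · rw [Fin.sum_univ_three]
  · intro x _ hx
    simpa using hx

lemma d_eq_mm (d : Fin 3 →₀ ℕ) : d = mm (d 0) (d 1) (d 2) := by
  ext x
  fin_cases x
  · exact (mm0 _ _ _).symm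
  · exact (mm1 _ _ _).symm
  · exact (mm2 _ _ _).symm

lemma hom_CXpow (a b c : ℕ) (z : ℂ) (h : a + b + c = 3) :
    ((C z * (X 0 ^ a * X 1 ^ b * X 2 ^ c)) : MvPolynomial (Fin 3) ℂ).IsHomogeneous 3 := by
  rw [CXpow_eq]
  exact isHomogeneous_monomial z (by rw [mm_degree, mm0, mm1, mm2]; exact h)

lemma decomp (f : MvPolynomial (Fin 3) ℂ) (hf : f.IsHomogeneous 3) :
    f = C (coeff (mm 3 0 0) f) * X 0 ^ 3
      + C (coeff (mm 2 1 0) f) * X 0 ^ 2 * X 1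
      + C (coeff (mm 2 0 1) f) * X 0 ^ 2 * X 2
      + C (coeff (mm 1 2 0) f) * X 0 * X 1 ^ 2
      + C (coeff (mm 1 1 1) f) * X 0 * X 1 * X 2
      + C (coeff (mm 1 0 2) f) * X 0 * X 2 ^ 2
      + C (coeff (mm 0 3 0) f) * X 1 ^ 3
      + C (coeff (mm 0 2 1) f) * X 1 ^ 2 * X 2
      + C (coeff (mm 0 1 2) f) * X 1 * X 2 ^ 2
      + C (coeff (mm 0 0 3) f) * X 2 ^ 3 := by
  ext d
  rw [show (C (coeff (mm 3 0 0) f) * X 0 ^ 3 : MvPolynomial (Fin 3) ℂ)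
      = C (coeff (mm 3 0 0) f) * (X 0 ^ 3 * X 1 ^ 0 * X 2 ^ 0) by ring,
    show (C (coeff (mm 2 1 0) f) * X 0 ^ 2 * X 1 : MvPolynomial (Fin 3) ℂ)
      = C (coeff (mm 2 1 0) f) * (X 0 ^ 2 * X 1 ^ 1 * X 2 ^ 0) by ring,
    show (C (coeff (mm 2 0 1) f) * X 0 ^ 2 * X 2 : MvPolynomial (Fin 3) ℂ)
      = C (coeff (mm 2 0 1) f) * (X 0 ^ 2 * X 1 ^ 0 * X 2 ^ 1) by ring,
    show (C (coeff (mm 1 2 0) f) * X 0 * X 1 ^ 2 : MvPolynomial (Fin 3) ℂ)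
      = C (coeff (mm 1 2 0) f) * (X 0 ^ 1 * X 1 ^ 2 * X 2 ^ 0) by ring,
    show (C (coeff (mm 1 1 1) f) * X 0 * X 1 * X 2 : MvPolynomial (Fin 3) ℂ)
      = C (coeff (mm 1 1 1) f) * (X 0 ^ 1 * X 1 ^ 1 * X 2 ^ 1) by ring,
    show (C (coeff (mm 1 0 2) f) * X 0 * X 2 ^ 2 : MvPolynomial (Fin 3) ℂ)
      = C (coeff (mm 1 0 2) f) * (X 0 ^ 1 * X 1 ^ 0 * X 2 ^ 2) by ring,
    show (C (coeff (mm 0 3 0) f) * X 1 ^ 3 : MvPolynomial (Fin 3) ℂ)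
      = C (coeff (mm 0 3 0) f) * (X 0 ^ 0 * X 1 ^ 3 * X 2 ^ 0) by ring,
    show (C (coeff (mm 0 2 1) f) * X 1 ^ 2 * X 2 : MvPolynomial (Fin 3) ℂ)
      = C (coeff (mm 0 2 1) f) * (X 0 ^ 0 * X 1 ^ 2 * X 2 ^ 1) by ring,
    show (C (coeff (mm 0 1 2) f) * X 1 * X 2 ^ 2 : MvPolynomial (Fin 3) ℂ)
      = C (coeff (mm 0 1 2) f) * (X 0 ^ 0 * X 1 ^ 1 * X 2 ^ 2) by ring,
    show (C (coeff (mm 0 0 3) f) * X 2 ^ 3 : MvPolynomial (Fin 3) ℂ)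
      = C (coeff (mm 0 0 3) f) * (X 0 ^ 0 * X 1 ^ 0 * X 2 ^ 3) by ring,
    CXpow_eq, CXpow_eq, CXpow_eq, CXpow_eq, CXpow_eq, CXpow_eq, CXpow_eq, CXpow_eq,
    CXpow_eq, CXpow_eq]
  simp only [coeff_add, coeff_monomial]
  by_cases hd : d 0 + d 1 + d 2 = 3
  · have hd0 : d 0 ≤ 3 := by omega
    have hd1 : d 1 ≤ 3 := by omega
    have hd2 : d 2 ≤ 3 := by omega
    have hdm := d_eq_mm d
    interval_cases h0 : d 0 <;> interval_cases h1 : d 1 <;> interval_cases h2 : d 2 <;>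
      simp_all [mm_eq_iff]
  · have h1 : coeff d f = 0 := hf.coeff_eq_zero (by rw [mm_degree]; exact hd)
    have h2 : ∀ a b c : ℕ, a + b + c = 3 → ¬ (mm a b c = d) := by
      intro a b c habc h
      rw [← h] at hd
      rw [mm0, mm1, mm2] at hd
      exact hd habc
    rw [h1, if_neg (h2 3 0 0 rfl), if_neg (h2 2 1 0 rfl), if_neg (h2 2 0 1 rfl),
      if_neg (h2 1 2 0 rfl), if_neg (h2 1 1 1 rfl), if_neg (h2 1 0 2 rfl),
      if_neg (h2 0 3 0 rfl), if_neg (h2 0 2 1 rfl), if_neg (h2 0 1 2 rfl),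
      if_neg (h2 0 0 3 rfl)]
    simp

lemma cubic_coeffs (b c d e r1 r2 r3 : ℂ) (h12 : r1 ≠ r2) (h13 : r1 ≠ r3) (h23 : r2 ≠ r3)
    (e1 : b*r1^3 + c*r1^2 + d*r1 + e = 0)
    (e2 : b*r2^3 + c*r2^2 + d*r2 + e = 0)
    (e3 : b*r3^3 + c*r3^2 + d*r3 + e = 0) :
    c = -b*(r1+r2+r3) ∧ d = b*(r1*r2+r1*r3+r2*r3) ∧ e = -b*(r1*r2*r3) := by
  have hΔ : (r1-r2)*((r1-r3)*(r2-r3)) ≠ 0 :=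
    mul_ne_zero (sub_ne_zero.mpr h12) (mul_ne_zero (sub_ne_zero.mpr h13) (sub_ne_zero.mpr h23))
  have h12' : r1 - r2 ≠ 0 := sub_ne_zero.mpr h12
  have hc : c = -b*(r1+r2+r3) := by
    have h : (c + b*(r1+r2+r3)) * ((r1-r2)*((r1-r3)*(r2-r3))) = 0 := by
      linear_combination (r2-r3)*e1 - (r1-r3)*e2 + (r1-r2)*e3
    have h0 := (mul_eq_zero.mp h).resolve_right hΔ
    linear_combination h0
  have hd : d = b*(r1*r2+r1*r3+r2*r3) := by
    have h : (d - b*(r1*r2+r1*r3+r2*r3)) * (r1-r2) = 0 := by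
      linear_combination e1 - e2 - (r1^2 - r2^2)*hc
    have h0 := (mul_eq_zero.mp h).resolve_right h12'
    linear_combination h0
  refine ⟨hc, hd, ?_⟩
  linear_combination e1 - r1^2*hc - r1*hd

/-- The explicit cubic through the nine points when the sum vanishes. -/
noncomputable def FF (a1 a2 a3 a4 a5 a6 a7 a8 a9 : ℂ) : MvPolynomial (Fin 3) ℂ :=
  C (-(a6*a7*a8)) * (X 0 ^ 3 * X 1 ^ 0 * X 2 ^ 0)
  + C (a6*a7+a6*a8+a7*a8) * (X 0 ^ 2 * X 1 ^ 1 * X 2 ^ 0)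
  + C (a1*a2*a3 + a4*a5*a9 + a6*a7*a8) * (X 0 ^ 2 * X 1 ^ 0 * X 2 ^ 1)
  + C (-(a6+a7+a8)) * (X 0 ^ 1 * X 1 ^ 2 * X 2 ^ 0)
  + C ((a1*a2+a1*a3+a2*a3) - (a4*a5+a4*a9+a5*a9) - (a6*a7+a6*a8+a7*a8))
      * (X 0 ^ 1 * X 1 ^ 1 * X 2 ^ 1)
  + C 1 * (X 0 ^ 0 * X 1 ^ 3 * X 2 ^ 0)
  + C (-(a4+a5+a9)) * (X 0 ^ 0 * X 1 ^ 2 * X 2 ^ 1)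
  + C (a4*a5+a4*a9+a5*a9) * (X 0 ^ 0 * X 1 ^ 1 * X 2 ^ 2)
  + C (-(a4*a5*a9)) * (X 0 ^ 0 * X 1 ^ 0 * X 2 ^ 3)

lemma FF_eval (a1 a2 a3 a4 a5 a6 a7 a8 a9 : ℂ) (v : Fin 3 → ℂ) :
    eval v (FF a1 a2 a3 a4 a5 a6 a7 a8 a9) =
      -(a6*a7*a8) * (v 0 ^ 3)
      + (a6*a7+a6*a8+a7*a8) * (v 0 ^ 2 * v 1)
      + (a1*a2*a3 + a4*a5*a9 + a6*a7*a8) * (v 0 ^ 2 * v 2)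
      + (-(a6+a7+a8)) * (v 0 * v 1 ^ 2)
      + ((a1*a2+a1*a3+a2*a3) - (a4*a5+a4*a9+a5*a9) - (a6*a7+a6*a8+a7*a8)) * (v 0 * v 1 * v 2)
      + v 1 ^ 3
      + (-(a4+a5+a9)) * (v 1 ^ 2 * v 2)
      + (a4*a5+a4*a9+a5*a9) * (v 1 * v 2 ^ 2)
      + (-(a4*a5*a9)) * (v 2 ^ 3) := by
  unfold FF
  simp only [map_add, eval_mul, eval_pow, eval_C, eval_X, pow_zero, mul_one, one_mul]
  ring

theorem stmt_0 (a1 a2 a3 a4 a5 a6 a7 a8 a9 : ℂ)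
    (h12 : a1 ≠ a2) (h13 : a1 ≠ a3) (h23 : a2 ≠ a3)
    (h45 : a4 ≠ a5) (h49 : a4 ≠ a9) (h59 : a5 ≠ a9)
    (h67 : a6 ≠ a7) (h68 : a6 ≠ a8) (h78 : a7 ≠ a8) :
    (∀ f : MvPolynomial (Fin 3) ℂ, f ≠ 0 → f.IsHomogeneous 3 →
        (eval ![1, -a1, 1] f = 0 ∧ eval ![1, -a2, 1] f = 0 ∧ eval ![1, -a3, 1] f = 0 ∧
         eval ![0, a4, 1] f = 0 ∧ eval ![0, a5, 1] f = 0 ∧ eval ![0, a9, 1] f = 0 ∧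
         eval ![1, a6, 0] f = 0 ∧ eval ![1, a7, 0] f = 0 ∧ eval ![1, a8, 0] f = 0) →
        ∃ c : ℂ, f = C c * (X 0 * (X 0 - X 2) * X 2)) ↔
      a1 + a2 + a3 + a4 + a5 + a6 + a7 + a8 + a9 ≠ 0 := by
  constructor
  · -- statement → sum ≠ 0
    intro H
    by_contra hs
    have hFhom : (FF a1 a2 a3 a4 a5 a6 a7 a8 a9).IsHomogeneous 3 := by
      unfold FF
      exact ((((((((hom_CXpow 3 0 0 _ rfl).add (hom_CXpow 2 1 0 _ rfl)).add
        (hom_CXpow 2 0 1 _ rfl)).add (hom_CXpow 1 2 0 _ rfl)).add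
        (hom_CXpow 1 1 1 _ rfl)).add (hom_CXpow 0 3 0 _ rfl)).add
        (hom_CXpow 0 2 1 _ rfl)).add (hom_CXpow 0 1 2 _ rfl)).add (hom_CXpow 0 0 3 _ rfl)
    have hev010 : eval ![(0:ℂ), 1, 0] (FF a1 a2 a3 a4 a5 a6 a7 a8 a9) = 1 := by
      rw [FF_eval]
      norm_num [show (![(0:ℂ),1,0] : Fin 3 → ℂ) 2 = 0 by rfl]
    have hF0 : FF a1 a2 a3 a4 a5 a6 a7 a8 a9 ≠ 0 := by
      intro h
      rw [h] at hev010
      simp at hev010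
    obtain ⟨c, hc⟩ := H (FF a1 a2 a3 a4 a5 a6 a7 a8 a9) hF0 hFhom
      ⟨by rw [FF_eval]; simp; linear_combination (-a1^2) * hs,
       by rw [FF_eval]; simp; linear_combination (-a2^2) * hs,
       by rw [FF_eval]; simp; linear_combination (-a3^2) * hs,
       by rw [FF_eval]; simp; ring,
       by rw [FF_eval]; simp; ring,
       by rw [FF_eval]; simp; ring,
       by rw [FF_eval]; simp; ring,
       by rw [FF_eval]; simp; ring,
       by rw [FF_eval]; simp; ring⟩
    rw [hc] at hev010
    simp only [eval_mul, eval_sub, eval_C, eval_X, Matrix.cons_val_zero] at hev010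
    rw [show (![(0:ℂ),1,0] : Fin 3 → ℂ) 2 = 0 by rfl] at hev010
    simp at hev010
  · -- sum ≠ 0 → statement
    intro hsum f hf0 hhom hev
    obtain ⟨E1, E2, E3, E4, E5, E6, E7, E8, E9⟩ := hev
    have hdec := decomp f hhom
    set k300 := coeff (mm 3 0 0) f with hk300
    set k210 := coeff (mm 2 1 0) f with hk210
    set k201 := coeff (mm 2 0 1) f with hk201
    set k120 := coeff (mm 1 2 0) f with hk120
    set k111 := coeff (mm 1 1 1) f with hk111
    set k102 := coeff (mm 1 0 2) f with hk102
    set k030 := coeff (mm 0 3 0) f with hk030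
    set k021 := coeff (mm 0 2 1) f with hk021
    set k012 := coeff (mm 0 1 2) f with hk012
    set k003 := coeff (mm 0 0 3) f with hk003
    rw [hdec] at E1 E2 E3 E4 E5 E6 E7 E8 E9
    simp at E1 E2 E3 E4 E5 E6 E7 E8 E9
    obtain ⟨hcC, hdC, heC⟩ := cubic_coeffs k030 k120 k210 k300 a6 a7 a8 h67 h68 h78
      (by linear_combination E7) (by linear_combination E8) (by linear_combination E9)
    obtain ⟨hcB, hdB, heB⟩ := cubic_coeffs k030 k021 k012 k003 a4 a5 a9 h45 h49 h59
      (by linear_combination E4) (by linear_combination E5) (by linear_combination E6)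
    obtain ⟨hcA, hdA, heA⟩ := cubic_coeffs k030 (k120+k021) (k210+k111+k012)
      (k300+k201+k102+k003) (-a1) (-a2) (-a3)
      (fun h => h12 (neg_inj.mp h)) (fun h => h13 (neg_inj.mp h)) (fun h => h23 (neg_inj.mp h))
      (by linear_combination E1) (by linear_combination E2) (by linear_combination E3)
    have h030 : k030 = 0 := by
      have h : k030 * (a1 + a2 + a3 + a4 + a5 + a6 + a7 + a8 + a9) = 0 := by
        linear_combination hcB + hcC - hcA
      exact (mul_eq_zero.mp h).resolve_right hsum
    rw [h030] at hcB hcC hdB hdC heB heC hdA heA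
    simp only [zero_mul, neg_zero, mul_zero] at hcB hcC hdB hdC heB heC hdA heA
    have h111 : k111 = 0 := by linear_combination hdA - hdB - hdC
    have h102 : k102 = -k201 := by linear_combination heA - heB - heC
    refine ⟨k201, ?_⟩
    rw [hdec, hcB, hcC, hdB, hdC, heB, heC, h030, h111, h102]
    simp only [map_zero, map_neg]
    ring
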